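/- Let E be a complex Banach space and let 𝒢 ⊆ L(E) be a subgroup of the group of invertible bounded linear operators on E which is compact in the operator norm topology and divisible (for each g ∈ 𝒢 and n ∈ ℕ there exists h ∈ 𝒢 with h^n = g). If for each T ∈ 𝒢 every spectral value of T is a root of unity, then 𝒢 = {id_E}. -/

import Mathlib

open Filter Topology

open Polynomial

set_option maxHeartbeats 1000000
set_option synthInstance.maxHeartbeats 400000
set_option linter.unusedSectionVars false
set_option linter.unusedVariables false

section Statement11Aux

variable {E : Type*} [NormedAddCommGroup E] [NormedSpace ℂ E] [CompleteSpace E]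

lemma expI_not_root (n : ℕ) (hn : 0 < n) : Complex.exp Complex.I ^ n ≠ 1 := by
  intro h
  rw [← Complex.exp_nat_mul, Complex.exp_eq_one_iff] at h
  obtain ⟨m, hm⟩ := h
  have hre : (n : ℝ) = m * (2 * Real.pi) := by
    have h2 : ((n : ℝ) : ℂ) = ((m * (2 * Real.pi) : ℝ) : ℂ) := by
      push_cast
      have hI : (Complex.I : ℂ) ≠ 0 := Complex.I_ne_zero
      apply mul_right_cancel₀ hI
      rw [hm]; ring
    exact_mod_cast h2
  have hm0 : (m : ℝ) ≠ 0 := by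
    rintro h0
    rw [h0, zero_mul] at hre
    exact (Nat.cast_pos.mpr hn).ne' hre
  have hπ : Real.pi = (n : ℝ) / (2 * m) := by
    field_simp
    linarith [hre]
  exact (irrational_pi.ne_rat ((n : ℚ)/(2*m))) (by push_cast [hπ]; ring)

lemma close_power {d : ℕ} (hd : 7 ≤ d) {ν : ℂ} (hν : IsPrimitiveRoot ν d) :
    ∃ e : ℕ, ‖ν ^ e - Complex.exp Complex.I‖ ≤ 16 / d := by
  have hd0 : (d : ℝ) > 0 := by positivity
  have hdne : d ≠ 0 := by omega
  haveI : NeZero d := ⟨hdne⟩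
  set η : ℂ := Complex.exp (2 * Real.pi * Complex.I / d) with hη
  have hηprim : IsPrimitiveRoot η d := Complex.isPrimitiveRoot_exp d hdne
  obtain ⟨j, hjd, hje⟩ := hν.eq_pow_of_pow_eq_one hηprim.pow_eq_one
  -- choose t = ⌊d / (2π)⌋
  set t : ℕ := ⌊(d : ℝ) / (2 * Real.pi)⌋₊ with ht
  have hπ : (0:ℝ) < Real.pi := Real.pi_pos
  have h2π : (0:ℝ) < 2 * Real.pi := by positivity
  have htle : (t : ℝ) ≤ (d : ℝ) / (2 * Real.pi) := Nat.floor_le (by positivity)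
  have htgt : (d : ℝ) / (2 * Real.pi) - 1 < t := by
    have := Nat.lt_floor_add_one ((d : ℝ) / (2 * Real.pi))
    linarith
  -- x := 2π t / d ∈ (1 - 2π/d, 1]
  set x : ℝ := 2 * Real.pi * t / d with hx
  have hx1 : x ≤ 1 := by
    rw [hx, div_le_one hd0]
    calc 2 * Real.pi * t ≤ 2 * Real.pi * ((d : ℝ) / (2 * Real.pi)) := by
          apply mul_le_mul_of_nonneg_left htle (le_of_lt h2π)
      _ = d := by field_simp
  have hx2 : 1 - 2 * Real.pi / d < x := by
    have e1 : ((d:ℝ)/(2*Real.pi))*(2*Real.pi) = d := div_mul_cancel₀ _ (ne_of_gt h2π)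
    have hkey : (d:ℝ) - 2*Real.pi < 2*Real.pi*t := by
      nlinarith [mul_lt_mul_of_pos_right htgt h2π, e1]
    have e2 : (2*Real.pi/ (d:ℝ)) * d = 2*Real.pi := div_mul_cancel₀ _ (ne_of_gt hd0)
    have e3 : (2*Real.pi*(t:ℝ)/d)*d = 2*Real.pi*(t:ℝ) := div_mul_cancel₀ _ (ne_of_gt hd0)
    rw [hx]
    nlinarith [hkey, e2, e3, hd0]
  -- ν ^ (j * t) = exp (x * I)
  have hpow : ν ^ (j * t) = Complex.exp (x * Complex.I) := by
    rw [pow_mul, hje, hη, ← Complex.exp_nat_mul]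
    congr 1
    rw [hx]
    push_cast
    have hdC : (d : ℂ) ≠ 0 := by exact_mod_cast hdne
    field_simp
  refine ⟨j * t, ?_⟩
  rw [hpow]
  have : Complex.exp (↑x * Complex.I) - Complex.exp Complex.I
      = Complex.exp Complex.I * (Complex.exp ((↑x - 1) * Complex.I) - 1) := by
    rw [mul_sub, ← Complex.exp_add, mul_one]
    ring_nf
  rw [this, norm_mul]
  have habs1 : ‖Complex.exp Complex.I‖ = 1 := by
    rw [Complex.norm_exp]; simp
  have habsxi : ‖(↑x - 1) * Complex.I‖ = |x - 1| := by
    rw [norm_mul, Complex.norm_I, mul_one]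
    rw [show ((x : ℂ) - 1) = ((x - 1 : ℝ) : ℂ) by push_cast; ring, Complex.norm_real, Real.norm_eq_abs]
  have hxd : |x - 1| ≤ 2 * Real.pi / d := by
    rw [abs_le]
    constructor <;> [linarith; linarith [div_nonneg (le_of_lt h2π) (le_of_lt hd0)]]
  have hle1 : ‖(↑x - 1) * Complex.I‖ ≤ 1 := by
    rw [habsxi]
    calc |x - 1| ≤ 2 * Real.pi / d := hxd
      _ ≤ 2 * Real.pi / 7 := by apply div_le_div_of_nonneg_left (le_of_lt h2π) (by norm_num) (by exact_mod_cast hd)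
      _ ≤ 1 := by nlinarith [Real.pi_lt_d2]
  have := Complex.norm_exp_sub_one_le hle1
  rw [habs1, one_mul]
  calc ‖Complex.exp ((↑x - 1) * Complex.I) - 1‖
      ≤ 2 * ‖(↑x - 1) * Complex.I‖ := this
    _ = 2 * |x - 1| := by rw [habsxi]
    _ ≤ 2 * (2 * Real.pi / d) := by linarith
    _ = (4 * Real.pi) / d := by ring
    _ ≤ 16 / d := by
        gcongr
        nlinarith [Real.pi_lt_d2]

lemma pow_mem_aux {G : Set (E →L[ℂ] E)} (hone : (1:E→L[ℂ]E) ∈ G)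
    (hmul : ∀ A ∈ G, ∀ B ∈ G, A*B ∈ G) {A} (hA : A ∈ G) : ∀ n : ℕ, A ^ n ∈ G := by
  intro n
  induction n with
  | zero => simpa using hone
  | succ n ih => rw [pow_succ]; exact hmul _ ih _ hA

lemma spectrum_restrict {X P : E →L[ℂ] E} (hcomm : X * P = P * X)
    (hXF : ∀ x : E, x ∈ LinearMap.ker (P : E →ₗ[ℂ] E) → X x ∈ LinearMap.ker (P : E →ₗ[ℂ] E)) :
    spectrum ℂ (ContinuousLinearMap.codRestrict
      (X.comp (LinearMap.ker (P : E →ₗ[ℂ] E)).subtypeL) (LinearMap.ker (P : E →ₗ[ℂ] E))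
      (fun x => hXF x x.2)) ⊆ spectrum ℂ X := by
  set F := LinearMap.ker (P : E →ₗ[ℂ] E) with hF
  set R : F →L[ℂ] F := ContinuousLinearMap.codRestrict
      (X.comp F.subtypeL) F (fun x => hXF x x.2) with hR
  intro lam hlam
  by_contra hnot
  rw [spectrum.notMem_iff] at hnot
  rw [spectrum.mem_iff] at hlam
  apply hlam
  obtain ⟨u, hu⟩ := hnot
  have hcommP : Commute P (↑u : E →L[ℂ] E) := by
    rw [Commute, SemiconjBy, hu, mul_sub, sub_mul, ← hcomm, Algebra.commutes]
  have hcommInv : Commute P (↑u⁻¹ : E →L[ℂ] E) := hcommP.units_inv_right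
  have hWF : ∀ x : F, (↑u⁻¹ : E →L[ℂ] E) (↑x : E) ∈ F := by
    intro x
    have hx : P (↑x : E) = 0 := x.2
    have h2 : P ((↑u⁻¹ : E →L[ℂ] E) (↑x : E)) = (↑u⁻¹ : E →L[ℂ] E) (P (↑x : E)) := by
      rw [← ContinuousLinearMap.mul_apply, ← ContinuousLinearMap.mul_apply, hcommInv.eq]
    simp only [hF, LinearMap.mem_ker, ContinuousLinearMap.coe_coe] at hx ⊢
    rw [h2, hx, map_zero]
  set V : F →L[ℂ] F := ContinuousLinearMap.codRestrict
      ((↑u⁻¹ : E →L[ℂ] E).comp F.subtypeL) F hWF with hV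
  have key1 : ∀ y : E, (↑u : E →L[ℂ] E) ((↑u⁻¹ : E →L[ℂ] E) y) = y := by
    intro y; rw [← ContinuousLinearMap.mul_apply, u.mul_inv]; rfl
  have key2 : ∀ y : E, (↑u⁻¹ : E →L[ℂ] E) ((↑u : E →L[ℂ] E) y) = y := by
    intro y; rw [← ContinuousLinearMap.mul_apply, u.inv_mul]; rfl
  have hucoe : ∀ y : E, (↑u : E →L[ℂ] E) y = lam • y - X y := by
    intro y
    rw [hu]
    simp [Algebra.algebraMap_eq_smul_one]
  rw [isUnit_iff_exists]
  refine ⟨V, ?_, ?_⟩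
  · ext x
    have hx := key1 (↑x : E)
    rw [hucoe] at hx
    simp only [ContinuousLinearMap.mul_apply, ContinuousLinearMap.sub_apply,
      Algebra.algebraMap_eq_smul_one, ContinuousLinearMap.smul_apply,
      ContinuousLinearMap.one_apply, hV, hR,
      ContinuousLinearMap.coe_codRestrict_apply, ContinuousLinearMap.coe_comp',
      Submodule.coe_subtypeL', Submodule.coe_subtype, Function.comp_apply]
    push_cast
    exact hx
  · ext x
    have hx := key2 (↑x : E)
    conv_lhs at hx => rw [hucoe]
    simp only [ContinuousLinearMap.mul_apply, ContinuousLinearMap.sub_apply,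
      Algebra.algebraMap_eq_smul_one, ContinuousLinearMap.smul_apply,
      ContinuousLinearMap.one_apply, hV, hR,
      ContinuousLinearMap.coe_codRestrict_apply, ContinuousLinearMap.coe_comp',
      Submodule.coe_subtypeL', Submodule.coe_subtype, Function.comp_apply]
    push_cast
    exact hx

lemma quasinil [Nontrivial E] {G : Set (E →L[ℂ] E)}
    (hone : (1 : E →L[ℂ] E) ∈ G)
    (hmul : ∀ A ∈ G, ∀ B ∈ G, A * B ∈ G)
    (hcp : IsCompact G)
    {A} (hA : A ∈ G) (hσ : spectrum ℂ A = {1}) : A = 1 := by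
  obtain ⟨M, hM⟩ := isBounded_iff_forall_norm_le.mp hcp.isBounded
  set S : ℕ → (E →L[ℂ] E) := fun n => ((n : ℝ))⁻¹ • ∑ k ∈ Finset.range n, A ^ k with hS
  have hMpos : (0:ℝ) ≤ M := le_trans (norm_nonneg _) (hM 1 hone)
  -- Cesàro means almost invariant
  have hgeom : ∀ n : ℕ, A * S n - S n = ((n : ℝ))⁻¹ • (A ^ n - 1) := by
    intro n
    rw [hS]
    simp only [mul_smul_comm, ← smul_sub]
    congr 1
    rw [← mul_geom_sum, sub_mul, one_mul]
  have hgeom' : ∀ n : ℕ, S n * A - S n = ((n : ℝ))⁻¹ • (A ^ n - 1) := by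
    intro n
    rw [hS]
    simp only [smul_mul_assoc, ← smul_sub]
    congr 1
    rw [← geom_sum_mul, mul_sub, mul_one]
  have hbound : ∀ n : ℕ, ‖A ^ n - 1‖ ≤ M + 1 := by
    intro n
    refine (norm_sub_le _ _).trans ?_
    have h1 : ‖A ^ n‖ ≤ M := hM _ (pow_mem_aux hone hmul hA n)
    have h2 : ‖(1 : E →L[ℂ] E)‖ = 1 := norm_one
    linarith
  -- membership in convex hull
  have hmemhull : ∀ n : ℕ, 1 ≤ n → S n ∈ convexHull ℝ G := by
    intro n hn
    rw [hS]
    simp only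
    rw [Finset.smul_sum]
    apply Convex.sum_mem (convex_convexHull ℝ G)
    · intro i _; positivity
    · rw [Finset.sum_const, Finset.card_range, nsmul_eq_mul]
      rw [mul_inv_cancel₀]
      exact Nat.cast_ne_zero.mpr (by omega)
    · intro i _
      exact subset_convexHull ℝ G (pow_mem_aux hone hmul hA i)
  -- compactness of closure of hull
  have htb : TotallyBounded (convexHull ℝ G) :=
    totallyBounded_convexHull.mpr hcp.totallyBounded
  have hK : IsCompact (closure (convexHull ℝ G)) :=
    htb.closure.isCompact_of_isClosed isClosed_closure
  have hTmem : ∀ k : ℕ, S (k + 1) ∈ closure (convexHull ℝ G) :=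
    fun k => subset_closure (hmemhull (k + 1) (by omega))
  obtain ⟨P, hPmem, φ, hφ, hφtend⟩ := hK.tendsto_subseq hTmem
  -- A * P = P
  have hg0 : Tendsto (fun i : ℕ => ((i : ℝ) + 1)⁻¹ * (M + 1)) atTop (𝓝 0) := by
    have h0 : Tendsto (fun i : ℕ => 1 / ((i : ℝ) + 1)) atTop (𝓝 0) :=
      tendsto_one_div_add_atTop_nhds_zero_nat
    have h1 := h0.mul_const (M + 1)
    simpa [one_div] using h1
  have hzero : Tendsto (fun i => A * S (φ i + 1) - S (φ i + 1)) atTop (𝓝 0) := by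
    apply squeeze_zero_norm ?_ hg0
    intro i
    rw [hgeom]
    rw [norm_smul ((((φ i + 1 : ℕ) : ℝ))⁻¹) (A ^ (φ i + 1) - 1)]
    have h1 : ‖((φ i + 1 : ℕ) : ℝ)⁻¹‖ = ((φ i + 1 : ℕ) : ℝ)⁻¹ := by
      rw [Real.norm_eq_abs, abs_of_nonneg]; positivity
    rw [h1]
    have h2 : ((φ i + 1 : ℕ) : ℝ)⁻¹ ≤ ((i : ℝ) + 1)⁻¹ := by
      apply inv_anti₀ (by positivity)
      push_cast
      have : (i:ℝ) ≤ (φ i : ℝ) := by exact_mod_cast hφ.le_apply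
      linarith
    exact mul_le_mul h2 (hbound _) (norm_nonneg _) (by positivity)
  have hAP : A * P = P := by
    have h1 : Tendsto (fun i => A * S (φ i + 1)) atTop (𝓝 (A * P)) :=
      tendsto_const_nhds.mul hφtend
    have h2 : Tendsto (fun i => A * S (φ i + 1) - S (φ i + 1)) atTop (𝓝 (A * P - P)) :=
      h1.sub hφtend
    have := tendsto_nhds_unique h2 hzero
    rwa [sub_eq_zero] at this
  have hzero' : Tendsto (fun i => S (φ i + 1) * A - S (φ i + 1)) atTop (𝓝 0) := by
    have : (fun i => S (φ i + 1) * A - S (φ i + 1))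
        = fun i => A * S (φ i + 1) - S (φ i + 1) := by
      funext i; rw [hgeom, hgeom']
    rw [this]; exact hzero
  have hPA : P * A = P := by
    have h1 : Tendsto (fun i => S (φ i + 1) * A) atTop (𝓝 (P * A)) :=
      hφtend.mul tendsto_const_nhds
    have h2 := h1.sub hφtend
    have := tendsto_nhds_unique h2 hzero'
    rwa [sub_eq_zero] at this
  have hApow : ∀ j : ℕ, A ^ j * P = P := by
    intro j
    induction j with
    | zero => simp
    | succ j ih => rw [pow_succ, mul_assoc, hAP, ih]
  have hPApow : ∀ j : ℕ, P * A ^ j = P := by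
    intro j
    induction j with
    | zero => simp
    | succ j ih => rw [pow_succ, ← mul_assoc, ih, hPA]
  have hSP : ∀ n : ℕ, 1 ≤ n → S n * P = P := by
    intro n hn
    have hne : ((n:ℝ)) ≠ 0 := Nat.cast_ne_zero.mpr (by omega)
    rw [hS]
    simp only [smul_mul_assoc, Finset.sum_mul]
    rw [Finset.sum_congr rfl (fun i _ => hApow i), Finset.sum_const, Finset.card_range]
    rw [← Nat.cast_smul_eq_nsmul ℝ, smul_smul, inv_mul_cancel₀ hne, one_smul]
  have hPS : ∀ n : ℕ, 1 ≤ n → P * S n = P := by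
    intro n hn
    have hne : ((n:ℝ)) ≠ 0 := Nat.cast_ne_zero.mpr (by omega)
    rw [hS]
    simp only [mul_smul_comm, Finset.mul_sum]
    rw [Finset.sum_congr rfl (fun i _ => hPApow i), Finset.sum_const, Finset.card_range]
    rw [← Nat.cast_smul_eq_nsmul ℝ, smul_smul, inv_mul_cancel₀ hne, one_smul]
  have hPP : P * P = P := by
    have h1 : Tendsto (fun i => S (φ i + 1) * P) atTop (𝓝 (P * P)) :=
      hφtend.mul tendsto_const_nhds
    have h2 : Tendsto (fun i => S (φ i + 1) * P) atTop (𝓝 P) := by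
      have : (fun i => S (φ i + 1) * P) = fun _ => P := by
        funext i; exact hSP _ (by omega)
      rw [this]; exact tendsto_const_nhds
    exact tendsto_nhds_unique h1 h2
  by_cases hP1 : P = 1
  · rw [hP1, mul_one] at hAP; exact hAP
  exfalso
  -- F := ker P nontrivial
  have hx : ∃ x : E, P x ≠ x := by
    by_contra h
    push_neg at h
    exact hP1 (by ext x; simpa using h x)
  obtain ⟨x, hx⟩ := hx
  set y := x - P x with hy
  have hy0 : y ≠ 0 := sub_ne_zero.mpr (Ne.symm hx)
  have hyF : P y = 0 := by
    rw [hy, map_sub]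
    have : P (P x) = (P * P) x := rfl
    rw [this, hPP, sub_self]
  set F := LinearMap.ker (P : E →ₗ[ℂ] E) with hF
  have hyFmem : y ∈ F := by simpa [hF, LinearMap.mem_ker] using hyF
  haveI : CompleteSpace F := (ContinuousLinearMap.isClosed_ker P).completeSpace_coe
  haveI : Nontrivial F := ⟨⟨⟨y, hyFmem⟩, 0, by simp [hy0]⟩⟩
  -- spectrum of S n is {1}
  have hspecS : ∀ n : ℕ, 1 ≤ n → spectrum ℂ (S n) = {1} := by
    intro n hn
    have hne : ((n:ℂ)) ≠ 0 := Nat.cast_ne_zero.mpr (by omega)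
    set p : ℂ[X] := C ((n:ℂ))⁻¹ * (∑ k ∈ Finset.range n, X ^ k) with hp
    have haeval : aeval A p = S n := by
      rw [hp, map_mul, aeval_C, map_sum]
      simp only [map_pow, aeval_X]
      rw [hS]
      simp only
      rw [Algebra.algebraMap_eq_smul_one, smul_one_mul]
      have hcast : ((n:ℂ))⁻¹ = algebraMap ℝ ℂ (((n:ℝ))⁻¹) := by
        rw [Complex.coe_algebraMap]
        push_cast
        ring
      rw [hcast, algebraMap_smul]
    have hsm := spectrum.map_polynomial_aeval A p
    rw [haeval, hσ, Set.image_singleton] at hsm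
    rw [hsm]
    have hev : eval 1 p = 1 := by
      rw [hp, eval_mul, eval_C, eval_geom_sum]
      simp only [one_pow, Finset.sum_const, Finset.card_range, nsmul_eq_mul, mul_one]
      exact inv_mul_cancel₀ hne
    rw [hev]
  -- choose a large index
  have h0 : Tendsto (fun i => S (φ i + 1) - P) atTop (𝓝 0) := by
    rw [← tendsto_sub_nhds_zero_iff] at hφtend
    exact hφtend
  have h1 : Tendsto (fun i => ‖S (φ i + 1) - P‖) atTop (𝓝 0) := by
    simpa using h0.norm
  obtain ⟨i, hi⟩ := (h1.eventually (gt_mem_nhds (show (0:ℝ) < 1 by norm_num))).exists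
  set n := φ i + 1 with hn
  have hn1 : 1 ≤ n := by omega
  have hcommSP : S n * P = P * S n := by rw [hSP n hn1, hPS n hn1]
  have hXF : ∀ x : E, x ∈ F → S n x ∈ F := by
    intro x hx
    rw [hF, LinearMap.mem_ker] at hx ⊢
    have h2 : P (S n x) = (P * S n) x := rfl
    show P (S n x) = 0
    rw [h2, hPS n hn1]
    exact hx
  set R := ContinuousLinearMap.codRestrict ((S n).comp F.subtypeL) F
    (fun x => hXF x x.2) with hR
  have hsub := spectrum_restrict (X := S n) (P := P) hcommSP hXF
  have hRle : ‖R‖ ≤ ‖S n - P‖ := by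
    apply ContinuousLinearMap.opNorm_le_bound _ (norm_nonneg _)
    intro x
    have hcoe : ‖R x‖ = ‖S n (↑x : E)‖ := rfl
    rw [hcoe]
    have hPx : P (↑x : E) = 0 := x.2
    have h4 : S n (↑x:E) = (S n - P) (↑x:E) := by
      rw [ContinuousLinearMap.sub_apply, hPx, sub_zero]
    rw [h4]
    calc ‖(S n - P) (↑x:E)‖ ≤ ‖S n - P‖ * ‖(↑x:E)‖ := (S n - P).le_opNorm _
      _ = ‖S n - P‖ * ‖x‖ := rfl
  have hsubR : spectrum ℂ R ⊆ spectrum ℂ (S n) := hsub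
  clear_value R
  clear hR hsub hXF
  clear_value F
  have hone' : (1:ℂ) ∈ spectrum ℂ R := by
    obtain ⟨z, hz⟩ := spectrum.nonempty R
    have hz1 : z = 1 := by
      have h' := hsubR hz
      rw [hspecS n hn1, Set.mem_singleton_iff] at h'
      exact h'
    rwa [hz1] at hz
  haveI hnoc : NormOneClass (↥F →L[ℂ] ↥F) := ContinuousLinearMap.normOneClass
  have hnorm1 : (1:ℝ) ≤ ‖R‖ := by
    have h3 : ‖(1:ℂ)‖ ≤ ‖R‖ := spectrum.norm_le_norm_of_mem (𝕜 := ℂ) (A := ↥F →L[ℂ] ↥F) hone'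
    simpa using h3
  linarith

lemma case1 [Nontrivial E] {G : Set (E →L[ℂ] E)}
    (hone : (1 : E →L[ℂ] E) ∈ G)
    (hmul : ∀ A ∈ G, ∀ B ∈ G, A * B ∈ G)
    (hcp : IsCompact G)
    (hdiv : ∀ A ∈ G, ∀ n : ℕ, 0 < n → ∃ B ∈ G, B ^ n = A)
    (hspec : ∀ A ∈ G, ∀ μ ∈ spectrum ℂ A, ∃ n : ℕ, 0 < n ∧ μ ^ n = 1)
    {A} (hA : A ∈ G) {μ : ℂ} (hμ : μ ∈ spectrum ℂ A) (hμ1 : μ ≠ 1) : False := by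
  obtain ⟨m, hm0, hmμ⟩ := hspec A hA μ hμ
  have key : ∀ k : ℕ, ∃ D ∈ G, ∃ lam : ℂ, lam ∈ spectrum ℂ D ∧
      ‖lam - Complex.exp Complex.I‖ ≤ 16 / (k + 7) := by
    intro k
    obtain ⟨B, hB, hBn⟩ := hdiv A hA (k+7).factorial (Nat.factorial_pos _)
    have hspecB : spectrum ℂ (B ^ (k+7).factorial) = (· ^ (k+7).factorial) '' spectrum ℂ B :=
      spectrum.map_pow_of_pos B (Nat.factorial_pos _)
    rw [hBn] at hspecB
    rw [hspecB] at hμ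
    obtain ⟨ν, hν, hνn'⟩ := hμ
    have hνn : ν ^ (k+7).factorial = μ := hνn'
    have hfin : IsOfFinOrder ν := isOfFinOrder_iff_pow_eq_one.mpr
      ⟨(k+7).factorial * m, by positivity, by rw [pow_mul, hνn, hmμ]⟩
    have hd0 : 0 < orderOf ν := hfin.orderOf_pos
    have hdgt : k + 7 ≤ orderOf ν := by
      by_contra hlt
      push_neg at hlt
      have hdvd : orderOf ν ∣ (k+7).factorial := Nat.dvd_factorial hd0 (by omega)
      have h1 : ν ^ (k+7).factorial = 1 := orderOf_dvd_iff_pow_eq_one.mp hdvd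
      exact hμ1 (by rw [← hνn, h1])

    have hprim : IsPrimitiveRoot ν (orderOf ν) := IsPrimitiveRoot.orderOf ν
    obtain ⟨e, he⟩ := close_power (le_trans (by omega) hdgt) hprim
    refine ⟨B ^ e, pow_mem_aux hone hmul hB e, ν ^ e, ?_, ?_⟩
    · exact spectrum.pow_image_subset B e ⟨ν, hν, rfl⟩
    · refine he.trans ?_
      gcongr
      exact_mod_cast hdgt
  choose D hD lam hlam hclose using key
  obtain ⟨Dl, hDl, φ, hφmono, hφtend⟩ := hcp.tendsto_subseq hD
  have hlamtend : Tendsto (fun i => lam (φ i)) atTop (𝓝 (Complex.exp Complex.I)) := by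
    rw [← tendsto_sub_nhds_zero_iff]
    have hg : Tendsto (fun i : ℕ => 16 / ((i : ℝ) + 7)) atTop (𝓝 0) := by
      have h0 := tendsto_const_div_atTop_nhds_zero_nat (16:ℝ)
      have h7 := h0.comp (tendsto_add_atTop_nat 7)
      convert h7 using 2 with i
      simp only [Function.comp]
      push_cast
      ring
    apply squeeze_zero_norm ?_ hg
    intro i
    refine (hclose (φ i)).trans ?_
    gcongr
    exact_mod_cast hφmono.le_apply
  have htend2 : Tendsto (fun i => algebraMap ℂ (E →L[ℂ] E) (lam (φ i)) - D (φ i)) atTop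
      (𝓝 (algebraMap ℂ (E →L[ℂ] E) (Complex.exp Complex.I) - Dl)) := by
    apply Tendsto.sub ?_ hφtend
    simp only [Algebra.algebraMap_eq_smul_one]
    exact hlamtend.smul_const _
  have hclosed : IsClosed {x : E →L[ℂ] E | ¬ IsUnit x} := by
    have h' := (Units.isOpen (R := E →L[ℂ] E)).isClosed_compl
    simpa [Set.compl_setOf] using h'
  have hmemlim : Complex.exp Complex.I ∈ spectrum ℂ Dl := by
    rw [spectrum.mem_iff]
    exact hclosed.mem_of_tendsto htend2
      (Eventually.of_forall fun i => spectrum.mem_iff.mp (hlam (φ i)))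
  obtain ⟨q, hq0, hq1⟩ := hspec Dl hDl _ hmemlim
  exact expI_not_root q hq0 hq1

end Statement11Aux

/-- Let `E` be a complex Banach space and `𝒢 ⊆ L(E)` a divisible subgroup of
the invertible operators which is compact in the operator norm topology. If for each `T ∈ 𝒢`
every spectral value of `T` is a root of unity, then `𝒢 = {id_E}`. -/
theorem statement11 {E : Type*} [NormedAddCommGroup E] [NormedSpace ℂ E] [CompleteSpace E]
    (G : Set (E →L[ℂ] E))
    (hone : (1 : E →L[ℂ] E) ∈ G)
    (hmul : ∀ A ∈ G, ∀ B ∈ G, A * B ∈ G)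
    (hinv : ∀ A ∈ G, ∃ B ∈ G, A * B = 1 ∧ B * A = 1)
    (hcp : IsCompact G)
    (hdiv : ∀ A ∈ G, ∀ n : ℕ, 0 < n → ∃ B ∈ G, B ^ n = A)
    (hspec : ∀ A ∈ G, ∀ μ ∈ spectrum ℂ A, ∃ n : ℕ, 0 < n ∧ μ ^ n = 1) :
    G = {1} := by
  rcases subsingleton_or_nontrivial E with hE | hE
  · apply Set.eq_singleton_iff_unique_mem.mpr
    refine ⟨hone, fun A hA => ?_⟩
    ext x
    exact Subsingleton.elim _ _
  · apply Set.eq_singleton_iff_unique_mem.mpr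
    refine ⟨hone, fun A hA => ?_⟩
    by_cases hc : ∀ B ∈ G, ∀ μ ∈ spectrum ℂ B, μ = (1:ℂ)
    · have hσ : spectrum ℂ A = {1} := by
        apply Set.eq_singleton_iff_unique_mem.mpr
        refine ⟨?_, fun μ hμ => hc A hA μ hμ⟩
        obtain ⟨z, hz⟩ := spectrum.nonempty A
        have hz1 := hc A hA z hz
        rwa [hz1] at hz
      exact quasinil hone hmul hcp hA hσ
    · push_neg at hc
      obtain ⟨B, hB, μ, hμ, hμ1⟩ := hc
      exact (case1 hone hmul hcp hdiv hspec hB hμ hμ1).elim
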